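/- Let F be a distribution function on ℝ₊ whose tail F̄ = 1−F is regularly varying with index −α < 0 (i.e., for all x > 0, F̄(tx)/F̄(t) → x^{-α} as t → ∞). Let X⁽¹⁾, …, X⁽ⁿ⁾ be i.i.d. with distribution F. Then P(X⁽¹⁾ + … + X⁽ⁿ⁾ > t) / F̄(t) → n as t → ∞. -/

import Mathlib

open MeasureTheory Filter ProbabilityTheory
open scoped ENNReal

/-- One large jump for regularly varying sums: if `X⁽¹⁾,…,X⁽ⁿ⁾` are i.i.d. nonnegative
with tail `F̄ ∈ RV_{-α}`, then `P(X⁽¹⁾+⋯+X⁽ⁿ⁾ > t)/F̄(t) → n`. -/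
theorem one_large_jump_rv_sum
    {Ω : Type*} [MeasurableSpace Ω] (μ : Measure Ω) [IsProbabilityMeasure μ]
    (n : ℕ) (hn : 0 < n) (α : ℝ) (hα : 0 < α) (X : Fin n → Ω → ℝ)
    (hmeas : ∀ k, Measurable (X k))
    (hnonneg : ∀ k ω, 0 ≤ X k ω)
    (hindep : iIndepFun X μ)
    (hident : ∀ k, Measure.map (X k) μ = Measure.map (X ⟨0, hn⟩) μ)
    (hrv : ∀ x : ℝ, 0 < x →
      Tendsto (fun t : ℝ =>
          (μ {ω | t * x < X ⟨0, hn⟩ ω}).toReal / (μ {ω | t < X ⟨0, hn⟩ ω}).toReal)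
        atTop (nhds (x ^ (-α))))
    (hpos : ∀ t : ℝ, 0 < (μ {ω | t < X ⟨0, hn⟩ ω}).toReal) :
    Tendsto (fun t : ℝ =>
        (μ {ω | t < ∑ k, X k ω}).toReal / (μ {ω | t < X ⟨0, hn⟩ ω}).toReal)
      atTop (nhds (n : ℝ)) := by
  classical
  set i0 : Fin n := ⟨0, hn⟩ with hi0
  -- the tail function
  set Q : ℝ → ℝ := fun t => (μ {ω | t < X i0 ω}).toReal with hQ
  have hQdef : ∀ t, Q t = (μ {ω | t < X i0 ω}).toReal := fun t => rfl
  have hn' : (0:ℝ) < n := by exact_mod_cast hn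
  -- measurability of tail sets
  have hms : ∀ (k : Fin n) (t : ℝ), MeasurableSet {ω | t < X k ω} := fun k t =>
    (hmeas k) measurableSet_Ioi
  -- identical tails
  have htail : ∀ (k : Fin n) (t : ℝ), μ {ω | t < X k ω} = μ {ω | t < X i0 ω} := by
    intro k t
    have h1 : μ {ω | t < X k ω} = (Measure.map (X k) μ) (Set.Ioi t) :=
      (Measure.map_apply (hmeas k) measurableSet_Ioi).symm
    have h2 : μ {ω | t < X i0 ω} = (Measure.map (X i0) μ) (Set.Ioi t) :=
      (Measure.map_apply (hmeas i0) measurableSet_Ioi).symm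
    rw [h1, h2, hident k]
  have htailc : ∀ (k : Fin n) (t : ℝ), μ {ω | X k ω ≤ t} = μ {ω | X i0 ω ≤ t} := by
    intro k t
    have h1 : μ {ω | X k ω ≤ t} = (Measure.map (X k) μ) (Set.Iic t) :=
      (Measure.map_apply (hmeas k) measurableSet_Iic).symm
    have h2 : μ {ω | X i0 ω ≤ t} = (Measure.map (X i0) μ) (Set.Iic t) :=
      (Measure.map_apply (hmeas i0) measurableSet_Iic).symm
    rw [h1, h2, hident k]
  -- Q is antitone
  have hQanti : Antitone Q := by
    intro a b hab
    exact ENNReal.toReal_mono (measure_ne_top μ _)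
      (measure_mono fun ω hω => lt_of_le_of_lt hab hω)
  -- Q tends to 0 at infinity
  have hQ0 : Tendsto Q atTop (nhds 0) := by
    have hseq : Tendsto (fun m : ℕ => μ {ω | (m:ℝ) < X i0 ω}) atTop (nhds 0) := by
      have h0 : (⋂ m : ℕ, {ω | (m:ℝ) < X i0 ω}) = ∅ := by
        ext ω
        simp only [Set.mem_iInter, Set.mem_setOf_eq, Set.mem_empty_iff_false, iff_false, not_forall]
        obtain ⟨m, hm⟩ := exists_nat_gt (X i0 ω)
        exact ⟨m, not_lt.2 hm.le⟩
      have h := tendsto_measure_iInter_atTop (μ := μ)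
        (s := fun m : ℕ => {ω | (m:ℝ) < X i0 ω})
        (fun m => (hms i0 m).nullMeasurableSet)
        (by
          intro a b hab ω hω
          simp only [Set.mem_setOf_eq] at hω ⊢
          exact lt_of_le_of_lt (by exact_mod_cast hab : (a:ℝ) ≤ (b:ℝ)) hω)
        ⟨0, measure_ne_top μ _⟩
      rw [h0, measure_empty] at h
      exact h
    have hQseq : Tendsto (fun m : ℕ => Q m) atTop (nhds 0) := by
      have := (ENNReal.tendsto_toReal (by simp)).comp hseq
      exact this
    have hub : Tendsto (fun t : ℝ => Q (⌊t⌋₊ : ℕ)) atTop (nhds 0) :=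
      hQseq.comp tendsto_nat_floor_atTop
    refine tendsto_of_tendsto_of_tendsto_of_le_of_le' tendsto_const_nhds hub ?_ ?_
    · exact Eventually.of_forall fun t => ENNReal.toReal_nonneg
    · filter_upwards [eventually_ge_atTop (0:ℝ)] with t ht
      exact hQanti (Nat.floor_le ht)
  -- complement identity
  have hcompl : ∀ t, (μ {ω | X i0 ω ≤ t}).toReal = 1 - Q t := by
    intro t
    have h1 : {ω | X i0 ω ≤ t} = {ω | t < X i0 ω}ᶜ := by
      ext ω; simp [not_lt]
    rw [h1, prob_compl_eq_one_sub (hms i0 t),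
      ENNReal.toReal_sub_of_le prob_le_one ENNReal.one_ne_top, ENNReal.toReal_one, hQdef]
  -- measurability of the sum event
  have hSmeas : ∀ t : ℝ, MeasurableSet {ω | t < ∑ k, X k ω} := fun t =>
    measurableSet_lt measurable_const (Finset.measurable_sum _ fun k _ => hmeas k)
  ------------------------------------------------------------------
  -- LOWER BOUND : 1 - (1 - Q t)^n ≤ P(S > t)
  ------------------------------------------------------------------
  have hlow : ∀ t : ℝ, 1 - (1 - Q t)^n ≤ (μ {ω | t < ∑ k, X k ω}).toReal := by
    intro t
    have hsub : (⋃ k, {ω | t < X k ω}) ⊆ {ω | t < ∑ k, X k ω} := by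
      intro ω hω
      simp only [Set.mem_iUnion, Set.mem_setOf_eq] at hω ⊢
      obtain ⟨k, hk⟩ := hω
      exact lt_of_lt_of_le hk
        (Finset.single_le_sum (fun j _ => hnonneg j ω) (Finset.mem_univ k))
    have hUnion : MeasurableSet (⋃ k, {ω | t < X k ω}) := MeasurableSet.iUnion fun k => hms k t
    have hcU : μ ((⋃ k, {ω | t < X k ω})ᶜ) = (μ {ω | X i0 ω ≤ t})^n := by
      have h1 : (⋃ k, {ω | t < X k ω})ᶜ = ⋂ k, {ω | X k ω ≤ t} := by
        ext ω; simp [not_lt]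
      have hInd : μ (⋂ k, {ω | X k ω ≤ t}) = ∏ k : Fin n, μ {ω | X k ω ≤ t} :=
        hindep.meas_iInter (fun k => ⟨Set.Iic t, measurableSet_Iic, rfl⟩)
      rw [h1, hInd]
      rw [Finset.prod_congr rfl (fun k _ => htailc k t), Finset.prod_const,
        Finset.card_univ, Fintype.card_fin]
    have h2 := prob_compl_eq_one_sub (μ := μ) hUnion
    have h3 : (μ ((⋃ k, {ω | t < X k ω})ᶜ)).toReal
        = 1 - (μ (⋃ k, {ω | t < X k ω})).toReal := by
      rw [h2, ENNReal.toReal_sub_of_le prob_le_one ENNReal.one_ne_top, ENNReal.toReal_one]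
    have h4 : (μ ((⋃ k, {ω | t < X k ω})ᶜ)).toReal = (1 - Q t)^n := by
      rw [hcU, ENNReal.toReal_pow, hcompl]
    have h5 : (μ (⋃ k, {ω | t < X k ω})).toReal ≤ (μ {ω | t < ∑ k, X k ω}).toReal :=
      ENNReal.toReal_mono (measure_ne_top μ _) (measure_mono hsub)
    linarith
  -- geometric identity
  have hgeom : ∀ t : ℝ, (1 - (1 - Q t)^n) / Q t = ∑ j ∈ Finset.range n, (1 - Q t)^j := by
    intro t
    have hp := hpos t
    rw [eq_comm, eq_div_iff (hp.ne')]
    have h1 := geom_sum_mul (1 - Q t) n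
    linear_combination -h1
  -- lower bound on the ratio
  have hratlow : ∀ t, (∑ j ∈ Finset.range n, (1 - Q t)^j)
      ≤ (μ {ω | t < ∑ k, X k ω}).toReal / Q t := by
    intro t
    rw [← hgeom t]
    have := hpos t
    rw [← hQdef] at this
    gcongr
    exact hlow t
  have hLo : Tendsto (fun t => ∑ j ∈ Finset.range n, (1 - Q t)^j) atTop (nhds (n : ℝ)) := by
    have h1 : Tendsto (fun t => (1 - Q t)) atTop (nhds 1) := by
      have := (tendsto_const_nhds (x := (1:ℝ)) (f := atTop)).sub hQ0
      simpa using this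
    have hsum := tendsto_finset_sum (Finset.range n) (fun j (_ : j ∈ Finset.range n) => h1.pow j)
    simpa using hsum
  ------------------------------------------------------------------
  -- UPPER BOUND : P(S > t) ≤ n Q(t(1-ε)) + n² Q(tε/n)²  for t > 0
  ------------------------------------------------------------------
  have hup : ∀ ε : ℝ, 0 < ε → ε < 1 → ∀ t : ℝ, 0 < t →
      (μ {ω | t < ∑ k, X k ω}).toReal
        ≤ n * Q (t * (1 - ε)) + (n:ℝ)^2 * (Q (t * (ε / n)))^2 := by
    intro ε hε hε1 t ht
    set b := t * (1 - ε) with hb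
    set c := t * (ε / n) with hc
    have hb0 : 0 ≤ b := mul_nonneg ht.le (by linarith)
    have hc0 : 0 ≤ c := mul_nonneg ht.le (div_nonneg hε.le hn'.le)
    -- set inclusion
    have hsub : {ω | t < ∑ k, X k ω} ⊆ (⋃ k, {ω | b < X k ω}) ∪
        (⋃ p : Fin n × Fin n, {ω | p.1 ≠ p.2 ∧ c < X p.1 ω ∧ c < X p.2 ω}) := by
      intro ω hω
      by_contra hcon
      simp only [Set.mem_union, Set.mem_iUnion, Set.mem_setOf_eq, not_or, not_exists] at hcon
      obtain ⟨h1, h2⟩ := hcon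
      have h1' : ∀ k, X k ω ≤ b := fun k => not_lt.1 (h1 k)
      have h2' : ∀ i j : Fin n, i ≠ j → c < X i ω → c < X j ω → False := by
        intro i j hij hi hj
        exact h2 (i, j) ⟨hij, hi, hj⟩
      set s : Finset (Fin n) := Finset.univ.filter (fun k => c < X k ω) with hs
      have hcard : s.card ≤ 1 := by
        refine Finset.card_le_one.2 fun i hi j hj => ?_
        by_contra hne
        exact h2' i j hne (Finset.mem_filter.1 hi).2 (Finset.mem_filter.1 hj).2
      have hsplit : ∑ k ∈ s, X k ω + ∑ k ∈ Finset.univ.filter (fun k => ¬ c < X k ω), X k ω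
          = ∑ k, X k ω :=
        Finset.sum_filter_add_sum_filter_not Finset.univ (fun k => c < X k ω) (fun k => X k ω)
      have hA : ∑ k ∈ s, X k ω ≤ b := by
        calc ∑ k ∈ s, X k ω ≤ s.card • b :=
              Finset.sum_le_card_nsmul s _ b (fun k _ => h1' k)
          _ = (s.card : ℝ) * b := by rw [nsmul_eq_mul]
          _ ≤ 1 * b := by
              apply mul_le_mul_of_nonneg_right _ hb0
              exact_mod_cast hcard
          _ = b := one_mul b
      have hB : ∑ k ∈ Finset.univ.filter (fun k => ¬ c < X k ω), X k ω ≤ n * c := by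
        calc ∑ k ∈ Finset.univ.filter (fun k => ¬ c < X k ω), X k ω
            ≤ (Finset.univ.filter (fun k => ¬ c < X k ω)).card • c :=
              Finset.sum_le_card_nsmul _ _ c
                (fun k hk => not_lt.1 (Finset.mem_filter.1 hk).2)
          _ = ((Finset.univ.filter (fun k => ¬ c < X k ω)).card : ℝ) * c := by rw [nsmul_eq_mul]
          _ ≤ n * c := by
              apply mul_le_mul_of_nonneg_right _ hc0
              exact_mod_cast (Finset.card_filter_le _ _).trans (by simp)
      have hnc : (n : ℝ) * c = t * ε := by
        rw [hc]; field_simp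
      have hSle : ∑ k, X k ω ≤ t := by
        rw [← hsplit]
        have : b + t * ε = t := by rw [hb]; ring
        linarith
      simp only [Set.mem_setOf_eq] at hω
      linarith
    -- measure bound in ℝ≥0∞
    have hmU : μ (⋃ k, {ω | b < X k ω}) ≤ (n : ℝ≥0∞) * μ {ω | b < X i0 ω} := by
      calc μ (⋃ k, {ω | b < X k ω}) ≤ ∑ k : Fin n, μ {ω | b < X k ω} :=
            measure_iUnion_fintype_le _ _
        _ = (n : ℝ≥0∞) * μ {ω | b < X i0 ω} := by
            rw [Finset.sum_congr rfl (fun k _ => htail k b), Finset.sum_const,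
              Finset.card_univ, Fintype.card_fin, nsmul_eq_mul]
    have hmP : μ (⋃ p : Fin n × Fin n, {ω | p.1 ≠ p.2 ∧ c < X p.1 ω ∧ c < X p.2 ω})
        ≤ (n : ℝ≥0∞)^2 * (μ {ω | c < X i0 ω})^2 := by
      calc μ (⋃ p : Fin n × Fin n, {ω | p.1 ≠ p.2 ∧ c < X p.1 ω ∧ c < X p.2 ω})
          ≤ ∑ p : Fin n × Fin n, μ {ω | p.1 ≠ p.2 ∧ c < X p.1 ω ∧ c < X p.2 ω} :=
            measure_iUnion_fintype_le _ _
        _ ≤ ∑ _p : Fin n × Fin n, (μ {ω | c < X i0 ω})^2 := by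
            refine Finset.sum_le_sum fun p _ => ?_
            rcases eq_or_ne p.1 p.2 with heq | hne
            · have : {ω | p.1 ≠ p.2 ∧ c < X p.1 ω ∧ c < X p.2 ω} = ∅ := by
                ext ω; simp [heq]
              simp [this]
            · have hset : {ω | p.1 ≠ p.2 ∧ c < X p.1 ω ∧ c < X p.2 ω}
                  = {ω | c < X p.1 ω} ∩ {ω | c < X p.2 ω} := by
                ext ω; simp [hne]
              have hmul : μ ({ω | c < X p.1 ω} ∩ {ω | c < X p.2 ω})
                  = μ {ω | c < X p.1 ω} * μ {ω | c < X p.2 ω} :=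
                (hindep.indepFun hne).measure_inter_preimage_eq_mul (Set.Ioi c) (Set.Ioi c)
                  measurableSet_Ioi measurableSet_Ioi
              rw [hset, hmul, htail p.1 c, htail p.2 c, sq]
        _ = (n : ℝ≥0∞)^2 * (μ {ω | c < X i0 ω})^2 := by
            rw [Finset.sum_const, Finset.card_univ, Fintype.card_prod, Fintype.card_fin,
              nsmul_eq_mul]
            push_cast
            ring
    have hmain : μ {ω | t < ∑ k, X k ω}
        ≤ (n : ℝ≥0∞) * μ {ω | b < X i0 ω} + (n : ℝ≥0∞)^2 * (μ {ω | c < X i0 ω})^2 :=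
      (measure_mono hsub).trans ((measure_union_le _ _).trans (add_le_add hmU hmP))
    have hfin1 : (n : ℝ≥0∞) * μ {ω | b < X i0 ω} ≠ ∞ :=
      ENNReal.mul_ne_top (ENNReal.natCast_ne_top n) (measure_ne_top μ _)
    have hfin2 : (n : ℝ≥0∞)^2 * (μ {ω | c < X i0 ω})^2 ≠ ∞ :=
      ENNReal.mul_ne_top (ENNReal.pow_ne_top (ENNReal.natCast_ne_top n))
        (ENNReal.pow_ne_top (measure_ne_top μ _))
    have hfin : (n : ℝ≥0∞) * μ {ω | b < X i0 ω} + (n : ℝ≥0∞)^2 * (μ {ω | c < X i0 ω})^2 ≠ ∞ :=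
      ENNReal.add_ne_top.2 ⟨hfin1, hfin2⟩
    calc (μ {ω | t < ∑ k, X k ω}).toReal
        ≤ ((n : ℝ≥0∞) * μ {ω | b < X i0 ω} + (n : ℝ≥0∞)^2 * (μ {ω | c < X i0 ω})^2).toReal :=
          ENNReal.toReal_mono hfin hmain
      _ = n * Q b + (n:ℝ)^2 * (Q c)^2 := by
          rw [ENNReal.toReal_add hfin1 hfin2, ENNReal.toReal_mul,
            ENNReal.toReal_mul, ENNReal.toReal_pow, ENNReal.toReal_pow, ENNReal.toReal_natCast,
            hQdef, hQdef]
  ------------------------------------------------------------------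
  -- limit of the upper bound
  ------------------------------------------------------------------
  have hrv' : ∀ x : ℝ, 0 < x →
      Tendsto (fun t : ℝ => Q (t * x) / Q t) atTop (nhds (x ^ (-α))) := fun x hx => hrv x hx
  have hupR : ∀ ε : ℝ, 0 < ε → ε < 1 →
      Tendsto (fun t => (n:ℝ) * (Q (t*(1-ε)) / Q t) + (n:ℝ)^2 * ((Q (t*(ε/n)) / Q t) * Q (t*(ε/n))))
        atTop (nhds ((n:ℝ) * (1-ε) ^ (-α))) := by
    intro ε hε hε1
    have h1 := hrv' (1-ε) (by linarith)
    have h2 := hrv' (ε/n) (div_pos hε hn')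
    have h3 : Tendsto (fun t : ℝ => Q (t*(ε/n))) atTop (nhds 0) :=
      hQ0.comp (tendsto_id.atTop_mul_const (div_pos hε hn'))
    have h := (tendsto_const_nhds (x := (n:ℝ))).mul h1 |>.add
      (((tendsto_const_nhds (x := (n:ℝ)^2)).mul (h2.mul h3)))
    simpa using h
  ------------------------------------------------------------------
  -- conclusion via order convergence
  ------------------------------------------------------------------
  suffices hmain : Tendsto (fun t : ℝ => (μ {ω | t < ∑ k, X k ω}).toReal / Q t)
      atTop (nhds (n : ℝ)) by exact hmain
  rw [tendsto_order]
  constructor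
  · -- lower
    intro a ha
    have h1 : ∀ᶠ t in atTop, a < ∑ j ∈ Finset.range n, (1 - Q t)^j :=
      hLo.eventually (eventually_gt_nhds ha)
    filter_upwards [h1] with t ht
    exact lt_of_lt_of_le ht (hratlow t)
  · -- upper
    intro a ha
    set a' : ℝ := ((n:ℝ) + a)/2 with ha'
    have ha'1 : (n:ℝ) < a' := by rw [ha']; linarith
    have ha'2 : a' < a := by rw [ha']; linarith
    have ha'pos : 0 < a' := lt_trans hn' ha'1
    have hfrac : 0 < (n:ℝ)/a' := div_pos hn' ha'pos
    have hfrac1 : (n:ℝ)/a' < 1 := (div_lt_one ha'pos).2 ha'1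
    set r : ℝ := ((n:ℝ)/a') ^ (1/α) with hr
    have hr0 : 0 < r := Real.rpow_pos_of_pos hfrac _
    have hr1 : r < 1 := Real.rpow_lt_one hfrac.le hfrac1 (one_div_pos.2 hα)
    set ε : ℝ := 1 - r with hεdef
    have hε : 0 < ε := by rw [hεdef]; linarith
    have hε1 : ε < 1 := by rw [hεdef]; linarith
    have hval : (1-ε) ^ (-α) = a'/(n:ℝ) := by
      have h1e : 1 - ε = r := by rw [hεdef]; ring
      rw [h1e, hr, ← Real.rpow_mul hfrac.le]
      have : (1/α) * (-α) = -1 := by field_simp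
      rw [this, Real.rpow_neg_one, inv_div]
    have hlim := hupR ε hε hε1
    rw [hval] at hlim
    have hna' : (n:ℝ) * (a'/(n:ℝ)) = a' := by field_simp
    rw [hna'] at hlim
    have hev1 : ∀ᶠ t in atTop,
        (n:ℝ) * (Q (t*(1-ε)) / Q t) + (n:ℝ)^2 * ((Q (t*(ε/n)) / Q t) * Q (t*(ε/n))) < a :=
      hlim.eventually (eventually_lt_nhds ha'2)
    have hev2 : ∀ᶠ t in atTop, (μ {ω | t < ∑ k, X k ω}).toReal / Q t
        ≤ (n:ℝ) * (Q (t*(1-ε)) / Q t) + (n:ℝ)^2 * ((Q (t*(ε/n)) / Q t) * Q (t*(ε/n))) := by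
      filter_upwards [eventually_gt_atTop (0:ℝ)] with t ht
      have h := hup ε hε hε1 t ht
      have hQt : 0 < Q t := by rw [hQdef]; exact hpos t
      calc (μ {ω | t < ∑ k, X k ω}).toReal / Q t
          ≤ ((n:ℝ) * Q (t*(1-ε)) + (n:ℝ)^2 * (Q (t*(ε/n)))^2) / Q t := by gcongr
        _ = (n:ℝ) * (Q (t*(1-ε)) / Q t) + (n:ℝ)^2 * ((Q (t*(ε/n)) / Q t) * Q (t*(ε/n))) := by
            field_simp
    filter_upwards [hev1, hev2] with t h1 h2
    exact lt_of_le_of_lt h2 h1
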